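/- Let Γ = (V,E) be a reflexive locally-finite k-separable graph and let X be a k-fragment of Γ. Then ∇⁻(∇(X)) = X, where ∇(Y) = V \ Γ(Y) and ∇⁻(Y) = V \ Γ⁻(Y). -/

import Mathlib

open Set

/-- Image of a set under a relation (graph). -/
def RelImage {V : Type*} (Γ : V → V → Prop) (X : Set V) : Set V := {y | ∃ x ∈ X, Γ x y}

/-- Reverse relation. -/
def RelRev {V : Type*} (Γ : V → V → Prop) : V → V → Prop := fun x y => Γ y x

/-- Boundary ∂(X) = Γ(X) \ X. -/
def RelBoundary {V : Type*} (Γ : V → V → Prop) (X : Set V) : Set V := RelImage Γ X \ X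

/-- Exterior ∇(X) = V \ Γ(X). -/
def RelNabla {V : Type*} (Γ : V → V → Prop) (X : Set V) : Set V := (RelImage Γ X)ᶜ

def RelReflexive {V : Type*} (Γ : V → V → Prop) : Prop := ∀ x, Γ x x

def RelLocallyFinite {V : Type*} (Γ : V → V → Prop) : Prop :=
  ∀ x : V, (RelImage Γ {x}).Finite ∧ (RelImage (RelRev Γ) {x}).Finite

/-- The family S_k(Γ): finite X with |X| ≥ k and at least k vertices outside Γ(X). -/
def SkFam {V : Type*} (Γ : V → V → Prop) (k : ℕ) : Set (Set V) :=
  {X | X.Finite ∧ k ≤ X.ncard ∧ ∃ Y : Set V, Y.Finite ∧ Y.ncard = k ∧ Y ⊆ RelNabla Γ X}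

def RelSeparable {V : Type*} (Γ : V → V → Prop) (k : ℕ) : Prop := (SkFam Γ k).Nonempty

/-- The k-isoperimetric connectivity κ_k(Γ). -/
noncomputable def relKappa {V : Type*} (Γ : V → V → Prop) (k : ℕ) : ℕ :=
  sInf ((fun X => (RelBoundary Γ X).ncard) '' SkFam Γ k)

def IsKFragment {V : Type*} (Γ : V → V → Prop) (k : ℕ) (X : Set V) : Prop :=
  X ∈ SkFam Γ k ∧ (RelBoundary Γ X).ncard = relKappa Γ k

def IsKAtom {V : Type*} (Γ : V → V → Prop) (k : ℕ) (X : Set V) : Prop :=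
  IsKFragment Γ k X ∧ ∀ Y, IsKFragment Γ k Y → X.ncard ≤ Y.ncard

/-- Γ is k-faithful: every k-atom A satisfies |A| ≤ |V \ Γ(A)|. -/
def KFaithful {V : Type*} (Γ : V → V → Prop) (k : ℕ) : Prop :=
  ∀ A, IsKAtom Γ k A → (RelNabla Γ A).Infinite ∨ A.ncard ≤ (RelNabla Γ A).ncard

theorem stmt3 {V : Type*} (Γ : V → V → Prop) (k : ℕ)
    (hrefl : RelReflexive Γ) (hlf : RelLocallyFinite Γ) (hsep : RelSeparable Γ k)
    (X : Set V) (hX : IsKFragment Γ k X) :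
    RelNabla (RelRev Γ) (RelNabla Γ X) = X := by
  obtain ⟨⟨hXfin, hXk, Y, hYfin, hYk, hYsub⟩, hXkappa⟩ := hX
  -- Γ(X) is finite
  have hImfin : (RelImage Γ X).Finite := by
    have : RelImage Γ X ⊆ ⋃ x ∈ X, RelImage Γ {x} := by
      rintro y ⟨x, hx, hxy⟩
      exact Set.mem_biUnion hx ⟨x, rfl, hxy⟩
    exact ((hXfin.biUnion (fun x _ => (hlf x).1)).subset this)
  ext z
  simp only [RelNabla, RelImage, RelRev, Set.mem_compl_iff, Set.mem_setOf_eq]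
  constructor
  · intro hz
    push_neg at hz
    -- hz : ∀ y, y ∉ Γ(X) → ¬ Γ z y, i.e. ∀ y, Γ z y → y ∈ Γ(X)
    have himg : ∀ y, Γ z y → y ∈ RelImage Γ X := by
      intro y hy
      by_contra hnot
      exact hz y (fun x hx hxy => hnot ⟨x, hx, hxy⟩) hy
    by_contra hzX
    -- X' = insert z X has same image, smaller boundary
    set X' := insert z X with hX'
    have hIm' : RelImage Γ X' = RelImage Γ X := by
      apply Set.Subset.antisymm
      · rintro y ⟨x, hx, hxy⟩
        rcases hx with rfl | hx
        · exact himg y hxy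
        · exact ⟨x, hx, hxy⟩
      · rintro y ⟨x, hx, hxy⟩
        exact ⟨x, Or.inr hx, hxy⟩
    have hzB : z ∈ RelBoundary Γ X := ⟨himg z (hrefl z), hzX⟩
    have hBfin : (RelBoundary Γ X).Finite := hImfin.subset (Set.diff_subset)
    have hB' : RelBoundary Γ X' = RelBoundary Γ X \ {z} := by
      simp only [RelBoundary, hIm', hX']
      ext y
      simp only [Set.mem_diff, Set.mem_insert_iff, Set.mem_singleton_iff]
      rw [← hX', hIm']
      tauto
    have hB'card : (RelBoundary Γ X').ncard = (RelBoundary Γ X).ncard - 1 := by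
      rw [hB']
      exact Set.ncard_diff_singleton_of_mem hzB
    have hX'mem : X' ∈ SkFam Γ k := by
      refine ⟨hXfin.insert z, le_trans hXk ?_, Y, hYfin, hYk, ?_⟩
      · exact Set.ncard_le_ncard (Set.subset_insert z X) (hXfin.insert z)
      · intro y hy
        have := hYsub hy
        simp only [RelNabla, Set.mem_compl_iff] at this ⊢
        rw [hIm']; exact this
    have hle : relKappa Γ k ≤ (RelBoundary Γ X').ncard :=
      Nat.sInf_le ⟨X', hX'mem, rfl⟩
    have hpos : 0 < (RelBoundary Γ X).ncard :=
      (Set.ncard_pos hBfin).mpr ⟨z, hzB⟩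
    rw [hB'card, hXkappa] at hle
    omega
  · rintro hzX ⟨y, hy, hzy⟩
    exact hy ⟨z, hzX, hzy⟩
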